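/- Let π be a finitely generated RFRS group and let g ∈ π with g ≠ 1. Then the cyclic subgroup ⟨g⟩ generated by g is a virtual retract of π: there exist a finite-index subgroup H of π with g ∈ H and a homomorphism ρ : H → ⟨g⟩ such that ρ(x) = x for every x ∈ ⟨g⟩. -/

import Mathlib

/-- A group `π` is RFRS (residually finite rationally solvable) if there is a descending
chain `π = π₀ ⊇ π₁ ⊇ ⋯` of normal finite-index subgroups with trivial intersection such
that for every `i`, every element of `πᵢ` whose image in the abelianization of `πᵢ` has
finite order lies in `πᵢ₊₁`. -/
def IsRFRS (π : Type) [Group π] : Prop :=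
  ∃ c : ℕ → Subgroup π,
    c 0 = ⊤ ∧ (∀ i, c (i + 1) ≤ c i) ∧ (∀ i, (c i).Normal) ∧ (∀ i, (c i).FiniteIndex) ∧
    (⨅ i, c i) = ⊥ ∧
    ∀ (i : ℕ) (x : ↥(c i)), IsOfFinOrder (Abelianization.of x) → (x : π) ∈ c (i + 1)

/-- In a finitely generated additive abelian group, any element of infinite order is
detected by a homomorphism to `ℤ`. -/
theorem exists_addHom_int_ne_zero {A : Type} [AddCommGroup A] [AddGroup.FG A]
    (a : A) (ha : ¬ IsOfFinAddOrder a) : ∃ f : A →+ ℤ, f a ≠ 0 := by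
  obtain ⟨n, ι, fι, p, hp, e, ⟨φ⟩⟩ := AddCommGroup.equiv_free_prod_directSum_zmod A
  haveI : ∀ i, NeZero (p i ^ e i) := fun i => ⟨pow_ne_zero _ (hp i).ne_zero⟩
  haveI : Finite (DirectSum ι (fun i => ZMod (p i ^ e i))) := by
    have : Finite (∀ i : ι, ZMod (p i ^ e i)) := inferInstance
    exact Finite.of_injective
      (fun (x : DirectSum ι (fun i => ZMod (p i ^ e i))) => (x : ∀ i, _))
      DFunLike.coe_injective
  have h1 : (φ a).1 ≠ 0 := by
    intro h0
    apply ha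
    have h2 : IsOfFinAddOrder (φ a) := by
      have : IsOfFinAddOrder ((0 : Fin n →₀ ℤ), (φ a).2) :=
        IsOfFinAddOrder.prod_mk IsOfFinAddOrder.zero (isOfFinAddOrder_of_finite (φ a).2)
      rwa [show ((0 : Fin n →₀ ℤ), (φ a).2) = φ a from Prod.ext h0.symm rfl] at this
    have := φ.symm.toAddMonoidHom.isOfFinAddOrder h2
    simpa using this
  obtain ⟨j, hj⟩ := Finsupp.ne_iff.1 h1
  refine ⟨(Finsupp.applyAddHom j).comp ((AddMonoidHom.fst _ _).comp φ.toAddMonoidHom), ?_⟩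
  simpa using hj

/-- If `π` is a finitely generated RFRS group and `g ≠ 1`, then the cyclic subgroup `⟨g⟩`
is a virtual retract of `π`: there are a finite-index subgroup `H` of `π` containing `g`
(equivalently, containing `⟨g⟩`) and a homomorphism `ρ : H → ⟨g⟩` restricting to the
identity on `⟨g⟩`. -/
theorem rfrs_cyclic_subgroup_virtual_retract
    {π : Type} [Group π] [Group.FG π] (hrfrs : IsRFRS π)
    (g : π) (hg : g ≠ 1) :
    ∃ H : Subgroup π, H.FiniteIndex ∧ ∃ hle : Subgroup.zpowers g ≤ H,
      ∃ ρ : ↥H →* π, (∀ x : ↥H, ρ x ∈ Subgroup.zpowers g) ∧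
        ∀ (x : π) (hx : x ∈ Subgroup.zpowers g), ρ ⟨x, hle hx⟩ = x := by
  classical
  obtain ⟨c, hc0, hdesc, hnorm, hfin, hinter, hstep⟩ := hrfrs
  -- find the last level containing `g`
  have hex : ∃ j, g ∉ c j := by
    by_contra h
    push_neg at h
    have : g ∈ ⨅ i, c i := Subgroup.mem_iInf.2 h
    rw [hinter] at this
    exact hg (Subgroup.mem_bot.1 this)
  have hj0 : Nat.find hex ≠ 0 := by
    intro h
    have := Nat.find_spec hex
    rw [h, hc0] at this
    exact this (Subgroup.mem_top g)
  obtain ⟨i, hi⟩ := Nat.exists_eq_succ_of_ne_zero hj0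
  have hgN : g ∈ c i := by
    by_contra h
    exact absurd h (by simpa using Nat.find_min hex (by omega))
  have hjspec : g ∉ c (i + 1) := by
    have := Nat.find_spec hex
    rwa [hi] at this
  -- `N := c i` is finitely generated of finite index and the image of `g` in its
  -- abelianization has infinite order
  set N := c i with hNdef
  haveI hNfin : N.FiniteIndex := hfin i
  haveI : Group.FG N := Subgroup.fg_of_index_ne_zero N
  have hnotfin : ¬ IsOfFinOrder (Abelianization.of (⟨g, hgN⟩ : N)) :=
    fun h => hjspec (hstep i ⟨g, hgN⟩ h)
  haveI : Group.FG (Abelianization N) :=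
    Group.fg_of_surjective (f := Abelianization.of)
      (fun x => Quotient.inductionOn' x fun y => ⟨y, rfl⟩)
  have hnotfin' : ¬ IsOfFinAddOrder (Additive.ofMul (Abelianization.of (⟨g, hgN⟩ : N))) := by
    rwa [isOfFinAddOrder_ofMul_iff]
  obtain ⟨f, hf⟩ := exists_addHom_int_ne_zero _ hnotfin'
  -- the homomorphism `φ : N →* Multiplicative ℤ` detecting `g`, given additively by `F`
  set φ : N →* Multiplicative ℤ :=
    (AddMonoidHom.toMultiplicativeRight f).comp Abelianization.of with hφ
  set F : N → ℤ := fun x => Multiplicative.toAdd (φ x) with hF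
  have hFmul : ∀ x y : N, F (x * y) = F x + F y := by
    intro x y
    simp [hF, map_mul]
  set d : ℤ := F ⟨g, hgN⟩ with hd
  have hd0 : d ≠ 0 := by simpa [hd, hF, hφ] using hf
  have hFzpow : ∀ (m : ℤ), F ((⟨g, hgN⟩ : N) ^ m) = m * d := by
    intro m
    simp [hF, map_zpow, hd, mul_comm]
  -- `H` is the preimage in `N` of `dℤ ≤ ℤ`
  set n₀ : ℕ := d.natAbs with hn₀
  haveI : NeZero n₀ := ⟨Int.natAbs_ne_zero.2 hd0⟩
  set χ : N →* Multiplicative (ZMod n₀) :=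
    (AddMonoidHom.toMultiplicative (Int.castAddHom (ZMod n₀))).comp φ with hχ
  have hker : ∀ y : N, y ∈ χ.ker ↔ d ∣ F y := by
    intro y
    rw [MonoidHom.mem_ker]
    have : χ y = Multiplicative.ofAdd ((F y : ZMod n₀)) := rfl
    rw [this, show (1 : Multiplicative (ZMod n₀)) = Multiplicative.ofAdd 0 from rfl,
      Multiplicative.ofAdd.apply_eq_iff_eq, ZMod.intCast_zmod_eq_zero_iff_dvd, hn₀,
      Int.natAbs_dvd]
  set H : Subgroup π := Subgroup.map N.subtype χ.ker with hH
  have hHN : H ≤ N := Subgroup.map_subtype_le _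
  have hmem : ∀ (x : π) (hx : x ∈ N), d ∣ F ⟨x, hx⟩ → x ∈ H := by
    intro x hx hdvd
    exact ⟨⟨x, hx⟩, (hker _).2 hdvd, rfl⟩
  have hmem' : ∀ x : π, x ∈ H → ∀ hx : x ∈ N, d ∣ F ⟨x, hx⟩ := by
    rintro x ⟨y, hy, rfl⟩ hx
    have h2 : (⟨N.subtype y, hx⟩ : N) = y := Subtype.ext rfl
    rw [h2]
    exact (hker _).1 hy
  have hgH : g ∈ H := hmem g hgN (by rw [← hd])
  have hle : Subgroup.zpowers g ≤ H := Subgroup.zpowers_le.2 hgH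
  -- finite index
  have hHfin : H.FiniteIndex := by
    haveI : χ.ker.FiniteIndex := Subgroup.finiteIndex_ker χ
    have hcomap : Subgroup.comap N.subtype H = χ.ker :=
      Subgroup.comap_map_eq_self_of_injective N.subtype_injective _
    constructor
    rw [← Subgroup.relIndex_mul_index hHN]
    exact mul_ne_zero (by
      have : H.relIndex N = (Subgroup.comap N.subtype H).index := rfl
      rw [this, hcomap]
      exact Subgroup.FiniteIndex.index_ne_zero) hNfin.index_ne_zero
  -- the retraction
  refine ⟨H, hHfin, hle, ?_⟩
  refine ⟨{ toFun := fun x => g ^ (F ⟨(x : π), hHN x.2⟩ / d)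
            map_one' := ?_
            map_mul' := ?_ }, ?_, ?_⟩
  · have : (⟨(1 : π), hHN (Subgroup.one_mem H)⟩ : N) = 1 := Subtype.ext rfl
    simp only [Subgroup.coe_one, this, hF, map_one, toAdd_one, Int.zero_ediv, zpow_zero]
  · intro x y
    have hxy : (⟨((x * y : H) : π), hHN (x * y).2⟩ : N)
        = (⟨(x : π), hHN x.2⟩ : N) * ⟨(y : π), hHN y.2⟩ := Subtype.ext rfl
    simp only [hxy, hFmul]
    rw [Int.add_ediv_of_dvd_left (hmem' _ x.2 _), zpow_add]
  · intro x
    exact ⟨_, rfl⟩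
  · intro x hx
    obtain ⟨m, rfl⟩ := Subgroup.mem_zpowers_iff.1 hx
    show g ^ (F ⟨g ^ m, hHN (hle hx)⟩ / d) = g ^ m
    have hpow : (⟨g ^ m, hHN ((hle hx))⟩ : N) = (⟨g, hgN⟩ : N) ^ m := Subtype.ext rfl
    rw [hpow, hFzpow, Int.mul_ediv_cancel _ hd0]
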